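/- arXiv:2503.08942 — 3 statements merged into one kernel-verified Lean document; each statement's English description precedes it below -/
import Mathlib

section
/- If π_ref is the uniform distribution on Y, then for every probability distribution π on Y and every β > 0, DualGap(π) ≤ DualGap_β(π) + 2β log|Y|. -/
open Real

/-- Tabular softmax policy. -/
noncomputable def softmax {Y : Type*} [Fintype Y] (θ : Y → ℝ) : Y → ℝ :=
  fun y => Real.exp (θ y) / ∑ y', Real.exp (θ y')

/-- Kullback–Leibler divergence between distributions on a finite set. -/
noncomputable def KLdiv {Y : Type*} [Fintype Y] (p q : Y → ℝ) : ℝ :=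
  ∑ y, p y * Real.log (p y / q y)

/-- `(P π)(y) = ∑ y' P(y, y') π(y')`. -/
noncomputable def matVec {Y : Type*} [Fintype Y] (P : Y → Y → ℝ) (p : Y → ℝ) : Y → ℝ :=
  fun y => ∑ y', P y y' * p y'

/-- The probability simplex over a finite set. -/
def simplex (Y : Type*) [Fintype Y] : Set (Y → ℝ) :=
  {p | (∀ y, 0 ≤ p y) ∧ ∑ y, p y = 1}

/-- Value of the preference game: `V(π, π') = ∑ y y', π(y) P(y,y') π'(y')`. -/
noncomputable def Vval {Y : Type*} [Fintype Y] (P : Y → Y → ℝ) (p q : Y → ℝ) : ℝ :=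
  ∑ y, ∑ y', p y * P y y' * q y'

/-- Regularized value `V_β(π, π') = V(π, π') − β KL(π‖π_ref) + β KL(π'‖π_ref)`. -/
noncomputable def Vreg {Y : Type*} [Fintype Y] (P : Y → Y → ℝ) (β : ℝ) (πref : Y → ℝ)
    (p q : Y → ℝ) : ℝ :=
  Vval P p q - β * KLdiv p πref + β * KLdiv q πref

/-- Regularized duality gap. -/
noncomputable def DualGapReg {Y : Type*} [Fintype Y] (P : Y → Y → ℝ) (β : ℝ) (πref : Y → ℝ)
    (p : Y → ℝ) : ℝ :=
  (⨆ q : simplex Y, Vreg P β πref q.1 p) - (⨅ q : simplex Y, Vreg P β πref p q.1)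

/-- Unregularized duality gap. -/
noncomputable def DualGap {Y : Type*} [Fintype Y] (P : Y → Y → ℝ) (p : Y → ℝ) : ℝ :=
  (⨆ q : simplex Y, Vval P q.1 p) - (⨅ q : simplex Y, Vval P p q.1)

section aux
variable {Y : Type*} [Fintype Y]

lemma kl_nonneg_unif (hN : 0 < (Fintype.card Y : ℝ)) {q : Y → ℝ} (hq : q ∈ simplex Y) :
    0 ≤ KLdiv q (fun _ => (Fintype.card Y : ℝ)⁻¹) := by
  set N : ℝ := (Fintype.card Y : ℝ)
  have key : ∀ y, q y - N⁻¹ ≤ q y * Real.log (q y / N⁻¹) := by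
    intro y
    rcases eq_or_lt_of_le (hq.1 y) with h | h
    · simp [← h]
      positivity
    · have hx : 0 < q y / N⁻¹ := by positivity
      have hlog : 1 - (q y / N⁻¹)⁻¹ ≤ Real.log (q y / N⁻¹) := by
        have := Real.log_le_sub_one_of_pos (inv_pos.mpr hx)
        rw [Real.log_inv] at this
        linarith
      have := mul_le_mul_of_nonneg_left hlog (le_of_lt h)
      calc q y - N⁻¹ = q y * (1 - (q y / N⁻¹)⁻¹) := by
            field_simp
          _ ≤ q y * Real.log (q y / N⁻¹) := this
  have hsum : ∑ y, (q y - N⁻¹) ≤ ∑ y, q y * Real.log (q y / N⁻¹) :=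
    Finset.sum_le_sum fun y _ => key y
  have : ∑ y, (q y - N⁻¹) = 0 := by
    rw [Finset.sum_sub_distrib, hq.2, Finset.sum_const]
    simp [N]
    rw [mul_inv_cancel₀ (show (Fintype.card Y : ℝ) ≠ 0 from hN.ne'), sub_self]
  rw [KLdiv]
  linarith

lemma kl_le_log_unif (hN : 0 < (Fintype.card Y : ℝ)) {q : Y → ℝ} (hq : q ∈ simplex Y) :
    KLdiv q (fun _ => (Fintype.card Y : ℝ)⁻¹) ≤ Real.log (Fintype.card Y) := by
  set N : ℝ := (Fintype.card Y : ℝ)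
  have hq1 : ∀ y, q y ≤ 1 := by
    intro y
    have := hq.2
    calc q y ≤ ∑ y', q y' := Finset.single_le_sum (fun y' _ => hq.1 y') (Finset.mem_univ y)
      _ = 1 := hq.2
  have key : ∀ y, q y * Real.log (q y / N⁻¹) ≤ q y * Real.log N := by
    intro y
    rcases eq_or_lt_of_le (hq.1 y) with h | h
    · simp [← h]
    · apply mul_le_mul_of_nonneg_left _ (le_of_lt h)
      apply Real.log_le_log (by positivity)
      rw [show q y / N⁻¹ = q y * N by field_simp]
      nlinarith [hq1 y]
  calc KLdiv q _ ≤ ∑ y, q y * Real.log N := Finset.sum_le_sum fun y _ => key y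
    _ = Real.log N := by rw [← Finset.sum_mul, hq.2, one_mul]

lemma Vval_nonneg {P : Y → Y → ℝ} (hP0 : ∀ y y', 0 ≤ P y y')
    {p q : Y → ℝ} (hp : p ∈ simplex Y) (hq : q ∈ simplex Y) : 0 ≤ Vval P p q := by
  apply Finset.sum_nonneg; intro y _
  apply Finset.sum_nonneg; intro y' _
  have := hp.1 y; have := hq.1 y'; have := hP0 y y'
  positivity

lemma Vval_le_one {P : Y → Y → ℝ} (hP0 : ∀ y y', 0 ≤ P y y') (hP1 : ∀ y y', P y y' ≤ 1)
    {p q : Y → ℝ} (hp : p ∈ simplex Y) (hq : q ∈ simplex Y) : Vval P p q ≤ 1 := by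
  have : Vval P p q ≤ ∑ y, ∑ y', p y * q y' := by
    apply Finset.sum_le_sum; intro y _
    apply Finset.sum_le_sum; intro y' _
    have h1 := hp.1 y; have h2 := hq.1 y'
    nlinarith [mul_nonneg (mul_nonneg h1 h2) (sub_nonneg.mpr (hP1 y y'))]
  calc Vval P p q ≤ ∑ y, ∑ y', p y * q y' := this
    _ = (∑ y, p y) * (∑ y', q y') := by rw [Finset.sum_mul_sum]
    _ = 1 := by rw [hp.2, hq.2, one_mul]

end aux

/-- if `π_ref` is the uniform distribution, then for every distribution `π` and
every `β > 0`, `DualGap(π) ≤ DualGap_β(π) + 2β log|Y|`. -/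
theorem dual_gap_le_regularized_dual_gap_add
    {Y : Type*} [Fintype Y] (hY : 2 ≤ Fintype.card Y)
    (P : Y → Y → ℝ)
    (hP0 : ∀ y y', 0 ≤ P y y') (hP1 : ∀ y y', P y y' ≤ 1)
    (hPsum : ∀ y y', P y y' + P y' y = 1)
    (πref : Y → ℝ) (href : πref = fun _ => (Fintype.card Y : ℝ)⁻¹)
    (p : Y → ℝ) (hp : p ∈ simplex Y)
    (β : ℝ) (hβ : 0 < β) :
    DualGap P p ≤ DualGapReg P β πref p + 2 * β * Real.log (Fintype.card Y) := by
  have hcard : 0 < Fintype.card Y := by omega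
  have hN : 0 < (Fintype.card Y : ℝ) := by exact_mod_cast hcard
  subst href
  set r : Y → ℝ := fun _ => (Fintype.card Y : ℝ)⁻¹ with hr
  set L := Real.log (Fintype.card Y) with hLdef
  have hL0 : 0 ≤ L := Real.log_nonneg (by exact_mod_cast Nat.one_le_of_lt hY)
  have hrs : r ∈ simplex Y := by
    constructor
    · intro y; positivity
    · simp [hr, Finset.sum_const]
      field_simp
  have hne : Nonempty ↑(simplex Y) := ⟨⟨r, hrs⟩⟩
  have hK : ∀ q : ↑(simplex Y), 0 ≤ KLdiv q.1 r ∧ KLdiv q.1 r ≤ L :=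
    fun q => ⟨kl_nonneg_unif hN q.2, kl_le_log_unif hN q.2⟩
  have hKp0 : 0 ≤ KLdiv p r := kl_nonneg_unif hN hp
  set Kp := KLdiv p r with hKp
  -- boundedness
  have hbddS : BddAbove (Set.range fun q : ↑(simplex Y) => Vreg P β r q.1 p) := by
    refine ⟨1 + β * Kp, ?_⟩
    rintro x ⟨q, rfl⟩
    have h1 := Vval_le_one hP0 hP1 q.2 hp
    have h2 := (hK q).1
    simp only [Vreg]
    nlinarith
  have hbddI : BddBelow (Set.range fun q : ↑(simplex Y) => Vreg P β r p q.1) := by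
    refine ⟨-(β * Kp), ?_⟩
    rintro x ⟨q, rfl⟩
    have h1 := Vval_nonneg hP0 hp q.2
    have h2 := (hK q).1
    simp only [Vreg]
    nlinarith
  have h1 : (⨆ q : ↑(simplex Y), Vval P q.1 p) ≤
      (⨆ q : ↑(simplex Y), Vreg P β r q.1 p) + (β * L - β * Kp) := by
    apply ciSup_le
    intro q
    have hle : Vreg P β r q.1 p ≤ ⨆ q : ↑(simplex Y), Vreg P β r q.1 p :=
      le_ciSup hbddS q
    have h2 := (hK q).2
    have : Vval P q.1 p = Vreg P β r q.1 p + β * KLdiv q.1 r - β * Kp := by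
      simp only [Vreg]; ring
    nlinarith
  have h2 : (⨅ q : ↑(simplex Y), Vreg P β r p q.1) + (β * Kp - β * L) ≤
      (⨅ q : ↑(simplex Y), Vval P p q.1) := by
    apply le_ciInf
    intro q
    have hle : (⨅ q : ↑(simplex Y), Vreg P β r p q.1) ≤ Vreg P β r p q.1 :=
      ciInf_le hbddI q
    have h2 := (hK q).2
    have : Vval P p q.1 = Vreg P β r p q.1 + β * Kp - β * KLdiv q.1 r := by
      simp only [Vreg]; ring
    nlinarith
  simp only [DualGap, DualGapReg]
  nlinarith
end

section
/- Let μ be a fixed probability distribution on Y and let {I(y,y'')}_{y,y''∈Y} be integrable real random variables (independent of θ) with E[I(y,y'')] = P(y,y'') for all y, y''. Define the population IPO loss L̂(θ) = E_{(y,y') ∼ Uniform(Y)×Uniform(Y), y'' ∼ μ} [ ( log(π_θ(y) π_ref(y') / (π_θ(y') π_ref(y))) − (I(y,y'') − I(y',y''))/β )² ], where the expectation is over the samples y, y', y'' but not over the randomness of I. Then E[∇_θ L̂(θ)] = ∇_θ L_IPO(θ; Uniform(Y)×Uniform(Y), μ), where the outer expectation is over the randomness of I. -/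
open Real

/-- Generalized IPO loss with sampling distribution `Uniform(Y) × Uniform(Y)` and fixed
comparison distribution `μdist` (not differentiated through). -/
noncomputable def LIPO {Y : Type*} [Fintype Y] (P : Y → Y → ℝ) (β : ℝ) (θref : Y → ℝ)
    (μdist : Y → ℝ) (θ : Y → ℝ) : ℝ :=
  ((Fintype.card Y : ℝ)⁻¹) ^ 2 * ∑ y, ∑ y',
    (Real.log (softmax θ y * softmax θref y' / (softmax θ y' * softmax θref y))
      - β⁻¹ * ∑ y'', μdist y'' * (P y y'' - P y' y'')) ^ 2

/-- Population IPO loss built from the (random) unbiased estimators `I` of the preference: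
the expectation is over the samples `(y, y') ∼ Uniform(Y) × Uniform(Y)` and `y'' ∼ μdist`. -/
noncomputable def LhatIPO {Y : Type*} [Fintype Y] (β : ℝ) (θref : Y → ℝ) (μdist : Y → ℝ)
    (I : Y → Y → ℝ) (θ : Y → ℝ) : ℝ :=
  ((Fintype.card Y : ℝ)⁻¹) ^ 2 * ∑ y, ∑ y', ∑ y'', μdist y'' *
    (Real.log (softmax θ y * softmax θref y' / (softmax θ y' * softmax θref y))
      - (I y y'' - I y' y'') / β) ^ 2

section Aux
variable {Y : Type*} [Fintype Y]

lemma sum_exp_pos [Nonempty Y] (θ : Y → ℝ) : 0 < ∑ y' : Y, Real.exp (θ y') :=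
  Finset.sum_pos (fun y _ => Real.exp_pos _) Finset.univ_nonempty

lemma softmax_pos [Nonempty Y] (θ : Y → ℝ) (y : Y) : 0 < softmax θ y :=
  div_pos (Real.exp_pos _) (sum_exp_pos θ)

lemma log_softmax [Nonempty Y] (θ : Y → ℝ) (y : Y) :
    Real.log (softmax θ y) = θ y - Real.log (∑ y', Real.exp (θ y')) := by
  unfold softmax
  rw [Real.log_div (Real.exp_ne_zero _) (ne_of_gt (sum_exp_pos θ)), Real.log_exp]

lemma log_ratio [Nonempty Y] (θ θref : Y → ℝ) (y y' : Y) :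
    Real.log (softmax θ y * softmax θref y' / (softmax θ y' * softmax θref y))
      = θ y - θ y' + (Real.log (softmax θref y') - Real.log (softmax θref y)) := by
  rw [Real.log_div (mul_pos (softmax_pos θ y) (softmax_pos θref y')).ne'
      (mul_pos (softmax_pos θ y') (softmax_pos θref y)).ne',
    Real.log_mul (softmax_pos θ y).ne' (softmax_pos θref y').ne',
    Real.log_mul (softmax_pos θ y').ne' (softmax_pos θref y).ne']
  simp only [log_softmax]
  ring

lemma hasFDerivAt_sq_term (y y' : Y) (a : ℝ) (θ : Y → ℝ) :
    HasFDerivAt (fun θ : Y → ℝ => (θ y - θ y' + a) ^ 2)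
      ((2 * (θ y - θ y' + a)) •
        ((ContinuousLinearMap.proj y : (Y → ℝ) →L[ℝ] ℝ) - ContinuousLinearMap.proj y')) θ := by
  have h : HasFDerivAt (fun θ : Y → ℝ => θ y - θ y' + a)
      ((ContinuousLinearMap.proj y : (Y → ℝ) →L[ℝ] ℝ) - ContinuousLinearMap.proj y') θ :=
    (((ContinuousLinearMap.proj y : (Y → ℝ) →L[ℝ] ℝ).hasFDerivAt.sub
      (ContinuousLinearMap.proj y' : (Y → ℝ) →L[ℝ] ℝ).hasFDerivAt).add_const a)
  have e1 : (fun θ : Y → ℝ => (θ y - θ y' + a) ^ 2) = fun θ => (θ y - θ y' + a) * (θ y - θ y' + a) := by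
    funext θ; ring
  rw [e1, two_mul, add_smul]
  exact h.fun_mul h

lemma fderiv_G (c : ℝ) (m : Y → ℝ) (a : Y → Y → Y → ℝ) (θ v : Y → ℝ) :
    fderiv ℝ (fun θ : Y → ℝ => c * ∑ y, ∑ y', ∑ y'', m y'' * (θ y - θ y' + a y y' y'') ^ 2) θ v
      = c * ∑ y, ∑ y', ∑ y'', m y'' * (2 * (θ y - θ y' + a y y' y'') * (v y - v y')) := by
  have H : HasFDerivAt (fun θ : Y → ℝ => c * ∑ y, ∑ y', ∑ y'', m y'' * (θ y - θ y' + a y y' y'') ^ 2)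
      (c • ∑ y : Y, ∑ y' : Y, ∑ y'' : Y, m y'' • ((2 * (θ y - θ y' + a y y' y'')) •
        ((ContinuousLinearMap.proj y : (Y → ℝ) →L[ℝ] ℝ) - ContinuousLinearMap.proj y'))) θ := by
    refine HasFDerivAt.const_mul ?_ c
    refine HasFDerivAt.fun_sum fun y _ => HasFDerivAt.fun_sum fun y' _ => HasFDerivAt.fun_sum fun y'' _ => ?_
    exact (hasFDerivAt_sq_term y y' (a y y' y'') θ).const_mul (m y'')
  rw [H.fderiv]
  simp only [ContinuousLinearMap.smul_apply, ContinuousLinearMap.sum_apply,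
    ContinuousLinearMap.sub_apply, ContinuousLinearMap.proj_apply, smul_eq_mul]

lemma fderiv_G2 (c : ℝ) (a : Y → Y → ℝ) (θ v : Y → ℝ) :
    fderiv ℝ (fun θ : Y → ℝ => c * ∑ y, ∑ y', (θ y - θ y' + a y y') ^ 2) θ v
      = c * ∑ y, ∑ y', 2 * (θ y - θ y' + a y y') * (v y - v y') := by
  have H : HasFDerivAt (fun θ : Y → ℝ => c * ∑ y, ∑ y', (θ y - θ y' + a y y') ^ 2)
      (c • ∑ y : Y, ∑ y' : Y, ((2 * (θ y - θ y' + a y y')) •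
        ((ContinuousLinearMap.proj y : (Y → ℝ) →L[ℝ] ℝ) - ContinuousLinearMap.proj y'))) θ := by
    refine HasFDerivAt.const_mul ?_ c
    exact HasFDerivAt.fun_sum fun y _ => HasFDerivAt.fun_sum fun y' _ => hasFDerivAt_sq_term y y' (a y y') θ
  rw [H.fderiv]
  simp only [ContinuousLinearMap.smul_apply, ContinuousLinearMap.sum_apply,
    ContinuousLinearMap.sub_apply, ContinuousLinearMap.proj_apply, smul_eq_mul]

end Aux

section Aux2
open MeasureTheory
variable {Y : Type*} [Fintype Y]

lemma LhatIPO_eq [Nonempty Y] (β : ℝ) (θref μdist : Y → ℝ) (J : Y → Y → ℝ) :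
    LhatIPO β θref μdist J = fun θ : Y → ℝ =>
      ((Fintype.card Y : ℝ)⁻¹) ^ 2 * ∑ y, ∑ y', ∑ y'', μdist y'' *
        (θ y - θ y' + ((Real.log (softmax θref y') - Real.log (softmax θref y))
          - (J y y'' - J y' y'') / β)) ^ 2 := by
  funext θ
  unfold LhatIPO
  refine congrArg (_ * ·) ?_
  refine Finset.sum_congr rfl fun y _ => Finset.sum_congr rfl fun y' _ =>
    Finset.sum_congr rfl fun y'' _ => ?_
  rw [log_ratio]
  ring

lemma LIPO_eq [Nonempty Y] (P : Y → Y → ℝ) (β : ℝ) (θref μdist : Y → ℝ) :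
    LIPO P β θref μdist = fun θ : Y → ℝ =>
      ((Fintype.card Y : ℝ)⁻¹) ^ 2 * ∑ y, ∑ y',
        (θ y - θ y' + ((Real.log (softmax θref y') - Real.log (softmax θref y))
          - β⁻¹ * ∑ y'', μdist y'' * (P y y'' - P y' y''))) ^ 2 := by
  funext θ
  unfold LIPO
  refine congrArg (_ * ·) ?_
  refine Finset.sum_congr rfl fun y _ => Finset.sum_congr rfl fun y' _ => ?_
  rw [log_ratio]
  ring

lemma integral_step {Ω : Type*} [MeasurableSpace Ω] (μp : Measure Ω) [IsProbabilityMeasure μp]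
    (c β : ℝ) (μdist : Y → ℝ) (hμ : ∑ y, μdist y = 1) (b : Y → Y → ℝ) (P : Y → Y → ℝ)
    (I : Ω → Y → Y → ℝ) (hIint : ∀ y y'', Integrable (fun ω => I ω y y'') μp)
    (hIunb : ∀ y y'', ∫ ω, I ω y y'' ∂μp = P y y'') (θ v : Y → ℝ) :
    ∫ ω, c * ∑ y, ∑ y', ∑ y'', μdist y'' *
        (2 * (θ y - θ y' + (b y y' - (I ω y y'' - I ω y' y'') / β)) * (v y - v y')) ∂μp
      = c * ∑ y, ∑ y', 2 * (θ y - θ y' +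
          (b y y' - β⁻¹ * ∑ y'', μdist y'' * (P y y'' - P y' y''))) * (v y - v y') := by
  have e : ∀ y y' y'' : Y,
      (fun ω => μdist y'' * (2 * (θ y - θ y' + (b y y' - (I ω y y'' - I ω y' y'') / β)) * (v y - v y')))
        = fun ω => ((μdist y'' * (2 * (θ y - θ y' + b y y') * (v y - v y')))
            + (-(μdist y'' * 2 * (v y - v y') / β)) * I ω y y'')
            + (μdist y'' * 2 * (v y - v y') / β) * I ω y' y'' := by
    intro y y' y''; funext ω; ring
  have hint : ∀ y y' y'' : Y, Integrable (fun ω => μdist y'' *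
      (2 * (θ y - θ y' + (b y y' - (I ω y y'' - I ω y' y'') / β)) * (v y - v y'))) μp := by
    intro y y' y''
    rw [e y y' y'']
    exact ((integrable_const _).add ((hIint y y'').const_mul _)).add ((hIint y' y'').const_mul _)
  have hval : ∀ y y' y'' : Y, ∫ ω, μdist y'' *
        (2 * (θ y - θ y' + (b y y' - (I ω y y'' - I ω y' y'') / β)) * (v y - v y')) ∂μp
      = μdist y'' * (2 * (θ y - θ y' + (b y y' - (P y y'' - P y' y'') / β)) * (v y - v y')) := by
    intro y y' y''
    have i1 : Integrable (fun ω => μdist y'' * (2 * (θ y - θ y' + b y y') * (v y - v y'))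
        + -(μdist y'' * 2 * (v y - v y') / β) * I ω y y'') μp :=
      (integrable_const _).add ((hIint y y'').const_mul _)
    have i2 : Integrable (fun ω => μdist y'' * 2 * (v y - v y') / β * I ω y' y'') μp :=
      (hIint y' y'').const_mul _
    rw [e y y' y'', integral_add i1 i2,
      integral_add (integrable_const _) (show Integrable
        (fun ω => -(μdist y'' * 2 * (v y - v y') / β) * I ω y y'') μp from (hIint y y'').const_mul _),
      integral_const, integral_const_mul, integral_const_mul, hIunb, hIunb]
    simp only [probReal_univ, measure_univ, ENNReal.toReal_one, one_smul]
    ring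
  rw [integral_const_mul]
  rw [integral_finset_sum _ fun y _ => integrable_finset_sum _ fun y' _ =>
    integrable_finset_sum _ fun y'' _ => hint y y' y'']
  refine congrArg (c * ·) (Finset.sum_congr rfl fun y _ => ?_)
  rw [integral_finset_sum _ fun y' _ => integrable_finset_sum _ fun y'' _ => hint y y' y'']
  refine Finset.sum_congr rfl fun y' _ => ?_
  rw [integral_finset_sum _ fun y'' _ => hint y y' y'']
  calc ∑ y'', ∫ ω, μdist y'' *
        (2 * (θ y - θ y' + (b y y' - (I ω y y'' - I ω y' y'') / β)) * (v y - v y')) ∂μp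
      = ∑ y'', ((2 * (θ y - θ y' + b y y') * (v y - v y')) * μdist y''
          - (2 * (v y - v y') / β) * (μdist y'' * (P y y'' - P y' y''))) :=
        Finset.sum_congr rfl fun y'' _ => by rw [hval y y' y'']; ring
    _ = (2 * (θ y - θ y' + b y y') * (v y - v y')) * (∑ y'', μdist y'')
          - (2 * (v y - v y') / β) * ∑ y'', μdist y'' * (P y y'' - P y' y'') := by
        rw [Finset.sum_sub_distrib, ← Finset.mul_sum, ← Finset.mul_sum]
    _ = 2 * (θ y - θ y' + (b y y' - β⁻¹ * ∑ y'', μdist y'' * (P y y'' - P y' y''))) * (v y - v y') := by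
        rw [hμ]; ring

end Aux2


open MeasureTheory in
/-- the gradient of the population IPO loss is an unbiased estimator of the
gradient of the generalized online IPO loss:
`E[∇_θ L̂(θ; π^s, μ)] = ∇_θ L_IPO(θ; π^s, μ)`. -/
theorem pop_ipo_loss_gradient_unbiased
    {Y : Type*} [Fintype Y] (hY : 2 ≤ Fintype.card Y)
    (P : Y → Y → ℝ)
    (hP0 : ∀ y y', 0 ≤ P y y') (hP1 : ∀ y y', P y y' ≤ 1)
    (hPsum : ∀ y y', P y y' + P y' y = 1)
    (β : ℝ) (hβ : 0 < β)
    (θref : Y → ℝ)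
    {Ω : Type*} [MeasurableSpace Ω] (μp : Measure Ω) [IsProbabilityMeasure μp]
    (μdist : Y → ℝ) (hμdist : (∀ y, 0 ≤ μdist y) ∧ ∑ y, μdist y = 1)
    (I : Ω → Y → Y → ℝ)
    (hIint : ∀ y y'', Integrable (fun ω => I ω y y'') μp)
    (hIunbiased : ∀ y y'', ∫ ω, I ω y y'' ∂μp = P y y'')
    (θ : Y → ℝ) (v : Y → ℝ) :
    ∫ ω, fderiv ℝ (LhatIPO β θref μdist (I ω)) θ v ∂μp
      = fderiv ℝ (LIPO P β θref μdist) θ v := by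
  have hNe : Nonempty Y := Fintype.card_pos_iff.mp (by omega)
  have h1 : ∀ ω, fderiv ℝ (LhatIPO β θref μdist (I ω)) θ v
      = ((Fintype.card Y : ℝ)⁻¹) ^ 2 * ∑ y, ∑ y', ∑ y'', μdist y'' *
          (2 * (θ y - θ y' + ((Real.log (softmax θref y') - Real.log (softmax θref y))
            - (I ω y y'' - I ω y' y'') / β)) * (v y - v y')) := by
    intro ω
    rw [LhatIPO_eq]
    exact fderiv_G _ _ _ θ v
  simp only [h1]
  rw [integral_step μp _ β μdist hμdist.2
    (fun y y' => Real.log (softmax θref y') - Real.log (softmax θref y)) P I hIint hIunbiased θ v,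
    LIPO_eq, fderiv_G2]
end

section
/- Let μ be a fixed probability distribution on Y and let π^s = Uniform(Y) × Uniform(Y). Setting d = θ − θ_ref − (Pμ)/β ∈ ℝ^{|Y|} and d̄ = (1/|Y|) Σ_{z∈Y} d(z), the gradient of the generalized IPO loss satisfies, for every coordinate z ∈ Y, (∇_θ L_IPO(θ; π^s, μ))(z) = (4/|Y|) · (d(z) − d̄). -/
open Real

/-- with `d = θ − θ_ref − (Pμ)/β` and `d̄` its average, each coordinate of the
gradient of the generalized IPO loss equals `(4/|Y|) (d(z) − d̄)`. -/
theorem ipo_loss_gradient_formula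
    {Y : Type*} [Fintype Y] [DecidableEq Y] (hY : 2 ≤ Fintype.card Y)
    (P : Y → Y → ℝ)
    (hP0 : ∀ y y', 0 ≤ P y y') (hP1 : ∀ y y', P y y' ≤ 1)
    (hPsum : ∀ y y', P y y' + P y' y = 1)
    (β : ℝ) (hβ : 0 < β)
    (θref : Y → ℝ)
    (μdist : Y → ℝ) (hμdist : (∀ y, 0 ≤ μdist y) ∧ ∑ y, μdist y = 1)
    (θ : Y → ℝ) (d : Y → ℝ)
    (hd : d = fun w => θ w - θref w - matVec P μdist w / β)
    (dbar : ℝ) (hdbar : dbar = (∑ w, d w) / (Fintype.card Y : ℝ))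
    (z : Y) :
    fderiv ℝ (LIPO P β θref μdist) θ (Pi.single z 1)
      = 4 / (Fintype.card Y : ℝ) * (d z - dbar) := by
  have hcard : (0 : ℕ) < Fintype.card Y := by omega
  have : Nonempty Y := Fintype.card_pos_iff.mp hcard
  set n : ℝ := (Fintype.card Y : ℝ) with hn
  have hn0 : n ≠ 0 := by positivity
  set e : Y → ℝ := fun w => θref w + matVec P μdist w / β with he
  -- Step 1: rewrite LIPO as a polynomial in θ
  have hL : LIPO P β θref μdist
      = fun t : Y → ℝ => (n⁻¹) ^ 2 * ∑ y, ∑ y', ((t y - t y') - (e y - e y')) ^ 2 := by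
    funext t
    unfold LIPO
    congr 1
    refine Finset.sum_congr rfl fun y _ => Finset.sum_congr rfl fun y' _ => ?_
    congr 1
    have hlog : Real.log (softmax t y * softmax θref y' / (softmax t y' * softmax θref y))
        = (t y - t y') - (θref y - θref y') := by
      have hS : 0 < ∑ w, Real.exp (t w) :=
        Finset.sum_pos (fun _ _ => Real.exp_pos _) Finset.univ_nonempty
      have hT : 0 < ∑ w, Real.exp (θref w) :=
        Finset.sum_pos (fun _ _ => Real.exp_pos _) Finset.univ_nonempty
      have h : softmax t y * softmax θref y' / (softmax t y' * softmax θref y)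
          = Real.exp ((t y - t y') - (θref y - θref y')) := by
        unfold softmax
        rw [Real.exp_sub, Real.exp_sub, Real.exp_sub]
        field_simp
      rw [h, Real.log_exp]
    have hsum : β⁻¹ * ∑ y'', μdist y'' * (P y y'' - P y' y'')
        = matVec P μdist y / β - matVec P μdist y' / β := by
      unfold matVec
      rw [div_sub_div_same, inv_mul_eq_div, ← Finset.sum_sub_distrib]
      congr 1
      exact Finset.sum_congr rfl fun w _ => by ring
    rw [hlog, hsum, he]
    ring
  -- Step 2: HasFDerivAt
  set D : (Y → ℝ) →L[ℝ] ℝ :=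
    (n⁻¹) ^ 2 • ∑ y, ∑ y', (2 * ((θ y - θ y') - (e y - e y'))) •
      ((ContinuousLinearMap.proj y : (Y → ℝ) →L[ℝ] ℝ) - (ContinuousLinearMap.proj y' : (Y → ℝ) →L[ℝ] ℝ)) with hD
  have hF : HasFDerivAt (LIPO P β θref μdist) D θ := by
    rw [hL, hD]
    have key : ∀ y y' : Y, HasFDerivAt (fun t : Y → ℝ => ((t y - t y') - (e y - e y')) ^ 2)
        ((2 * ((θ y - θ y') - (e y - e y'))) •
          ((ContinuousLinearMap.proj y : (Y → ℝ) →L[ℝ] ℝ) - (ContinuousLinearMap.proj y' : (Y → ℝ) →L[ℝ] ℝ))) θ := by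
      intro y y'
      have h1 : HasFDerivAt (fun t : Y → ℝ => (t y - t y') - (e y - e y'))
          ((ContinuousLinearMap.proj y : (Y → ℝ) →L[ℝ] ℝ) - (ContinuousLinearMap.proj y' : (Y → ℝ) →L[ℝ] ℝ)) θ := by
        exact (((ContinuousLinearMap.proj y : (Y → ℝ) →L[ℝ] ℝ)).hasFDerivAt.sub
          ((ContinuousLinearMap.proj y' : (Y → ℝ) →L[ℝ] ℝ)).hasFDerivAt).sub_const _
      have h2 := h1.mul h1
      refine (h2.congr_of_eventuallyEq (Filter.Eventually.of_forall fun t => ?_)).congr_fderiv ?_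
      · simp only [Pi.mul_apply]; ring
      · ext v
        simp [two_mul]
        ring
    have hsum : HasFDerivAt (fun t : Y → ℝ => ∑ y, ∑ y', ((t y - t y') - (e y - e y')) ^ 2)
        (∑ y, ∑ y', (2 * ((θ y - θ y') - (e y - e y'))) •
          ((ContinuousLinearMap.proj y : (Y → ℝ) →L[ℝ] ℝ) - (ContinuousLinearMap.proj y' : (Y → ℝ) →L[ℝ] ℝ))) θ := by
      exact HasFDerivAt.fun_sum fun y _ => HasFDerivAt.fun_sum fun y' _ => key y y'
    exact hsum.const_mul _
  rw [hF.fderiv, hD]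
  -- Step 3: evaluate
  have hde : ∀ w, d w = θ w - e w := by
    intro w; rw [hd, he]; ring
  have heval : ∀ y y' : Y,
      (((ContinuousLinearMap.proj y : (Y → ℝ) →L[ℝ] ℝ) - (ContinuousLinearMap.proj y' : (Y → ℝ) →L[ℝ] ℝ)))
        (Pi.single z 1) = (if y = z then (1:ℝ) else 0) - (if y' = z then (1:ℝ) else 0) := by
    intro y y'
    simp only [ContinuousLinearMap.sub_apply, ContinuousLinearMap.proj_apply, Pi.single_apply]
  rw [ContinuousLinearMap.smul_apply, ContinuousLinearMap.sum_apply]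
  simp only [ContinuousLinearMap.sum_apply, ContinuousLinearMap.smul_apply, heval]
  have hterm : ∀ y y' : Y, (2 * ((θ y - θ y') - (e y - e y'))) •
      ((if y = z then (1:ℝ) else 0) - (if y' = z then (1:ℝ) else 0))
      = 2 * (d y - d y') * ((if y = z then (1:ℝ) else 0) - (if y' = z then (1:ℝ) else 0)) := by
    intro y y'; rw [smul_eq_mul, hde y, hde y']; ring
  simp only [hterm]
  have hS : ∀ y : Y, ∑ y', 2 * (d y - d y') *
      ((if y = z then (1:ℝ) else 0) - (if y' = z then (1:ℝ) else 0))
      = 2 * d y * (if y = z then (1:ℝ) else 0) * n - 2 * d y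
        - 2 * (if y = z then (1:ℝ) else 0) * (∑ w, d w) + 2 * d z := by
    intro y
    have h1 : ∀ y' : Y, 2 * (d y - d y') *
        ((if y = z then (1:ℝ) else 0) - (if y' = z then (1:ℝ) else 0))
        = (2 * d y * (if y = z then (1:ℝ) else 0) - 2 * d y * (if y' = z then (1:ℝ) else 0))
          - (2 * (if y = z then (1:ℝ) else 0)) * d y'
          + 2 * (d y' * (if y' = z then (1:ℝ) else 0)) := by
      intro y'; ring
    simp only [h1]
    rw [Finset.sum_add_distrib, Finset.sum_sub_distrib, Finset.sum_sub_distrib,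
      Finset.sum_const, ← Finset.mul_sum, ← Finset.mul_sum]
    have e1 : (∑ y' : Y, if y' = z then (1:ℝ) else 0) = 1 := by simp
    have e2 : (∑ y' : Y, 2 * (d y' * if y' = z then (1:ℝ) else 0)) = 2 * d z := by
      simp [mul_ite, Finset.sum_ite_eq']
    rw [e1, e2, Finset.card_univ, nsmul_eq_mul, ← hn]
    ring
  simp only [hS]
  rw [Finset.sum_add_distrib, Finset.sum_sub_distrib, Finset.sum_sub_distrib, Finset.sum_const]
  have e4 : (∑ y : Y, 2 * d y * (if y = z then (1:ℝ) else 0) * n) = 2 * d z * n := by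
    have h4 : ∀ y : Y, 2 * d y * (if y = z then (1:ℝ) else 0) * n
        = (if y = z then 2 * d y * n else 0) := by
      intro y; split <;> simp
    simp only [h4, Finset.sum_ite_eq', Finset.mem_univ, if_true]
  have e5 : (∑ y : Y, 2 * d y) = 2 * ∑ w, d w := by
    rw [← Finset.mul_sum]
  have e6 : (∑ y : Y, 2 * (if y = z then (1:ℝ) else 0) * (∑ w, d w)) = 2 * ∑ w, d w := by
    have h6 : ∀ y : Y, 2 * (if y = z then (1:ℝ) else 0) * (∑ w, d w)
        = (if y = z then 2 * ∑ w, d w else 0) := by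
      intro y; split <;> simp
    simp only [h6, Finset.sum_ite_eq', Finset.mem_univ, if_true]
  rw [e4, e5, e6, Finset.card_univ, nsmul_eq_mul, ← hn, smul_eq_mul, hdbar]
  field_simp
  ring
end
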